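/- Let H be a complex Hilbert space, σ(f,g) = Im⟨f,g⟩, and S a bounded nonnegative sesquilinear form on H. Then the condition |σ(f,g)|² ≤ S(f,f)·S(g,g) for all f, g ∈ H holds if and only if the bounded self-adjoint operator A with S(f,g) = ⟨f, Ag⟩ satisfies A ≥ I (i.e., ⟨f, Af⟩ ≥ ⟨f,f⟩ for all f). -/

import Mathlib

open scoped InnerProductSpace
open RCLike

noncomputable section

/-- for a bounded self-adjoint operator `A` representing a nonnegative
sesquilinear form `S(f,g) = ⟪f, A g⟫` on a complex Hilbert space, the symplectic
positivity condition `|Im⟪f,g⟫|² ≤ S(f,f) S(g,g)` for all `f, g` holds iff `A ≥ I`,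
i.e. `⟪f, A f⟫ ≥ ⟪f, f⟫` for all `f`. -/
theorem sigma_dominated_iff_A_ge_one
    {H : Type*} [NormedAddCommGroup H] [InnerProductSpace ℂ H] [CompleteSpace H]
    (A : H →L[ℂ] H) (hA : IsSelfAdjoint A)
    (hpos : ∀ f : H, 0 ≤ (⟪f, A f⟫_ℂ).re) :
    (∀ f g : H, |(⟪f, g⟫_ℂ).im| ^ 2 ≤ (⟪f, A f⟫_ℂ).re * (⟪g, A g⟫_ℂ).re) ↔
      (∀ f : H, (⟪f, f⟫_ℂ).re ≤ (⟪f, A f⟫_ℂ).re) := by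
  constructor
  · intro h f
    have key := h f ((Complex.I : ℂ) • f)
    have h1 : ⟪f, (Complex.I : ℂ) • f⟫_ℂ = Complex.I * ⟪f, f⟫_ℂ := by
      rw [inner_smul_right]
    have him : (⟪f, (Complex.I : ℂ) • f⟫_ℂ).im = (⟪f, f⟫_ℂ).re := by
      rw [h1]; simp
    have h2 : ⟪(Complex.I : ℂ) • f, A ((Complex.I : ℂ) • f)⟫_ℂ = ⟪f, A f⟫_ℂ := by
      rw [map_smul, inner_smul_right, inner_smul_left]
      simp [Complex.conj_I]
      ring_nf
      simp [Complex.I_sq]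
    rw [him, h2] at key
    have hf : 0 ≤ (⟪f, f⟫_ℂ).re := by
      simpa using inner_self_nonneg (𝕜 := ℂ) (x := f)
    rw [abs_of_nonneg hf] at key
    nlinarith [hpos f]
  · intro h f g
    have h1 : |(⟪f, g⟫_ℂ).im| ≤ ‖f‖ * ‖g‖ := by
      calc |(⟪f, g⟫_ℂ).im| ≤ ‖⟪f, g⟫_ℂ‖ := Complex.abs_im_le_norm _
        _ ≤ ‖f‖ * ‖g‖ := by
            exact norm_inner_le_norm f g
    have h2 : ‖f‖ ^ 2 ≤ (⟪f, A f⟫_ℂ).re := by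
      have := h f
      have e : (⟪f, f⟫_ℂ).re = ‖f‖ ^ 2 := by
        simpa using inner_self_eq_norm_sq (𝕜 := ℂ) f
      linarith
    have h3 : ‖g‖ ^ 2 ≤ (⟪g, A g⟫_ℂ).re := by
      have := h g
      have e : (⟪g, g⟫_ℂ).re = ‖g‖ ^ 2 := by
        simpa using inner_self_eq_norm_sq (𝕜 := ℂ) g
      linarith
    calc |(⟪f, g⟫_ℂ).im| ^ 2 ≤ (‖f‖ * ‖g‖) ^ 2 := by
          apply pow_le_pow_left₀ (abs_nonneg _) h1
      _ = ‖f‖ ^ 2 * ‖g‖ ^ 2 := by ring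
      _ ≤ (⟪f, A f⟫_ℂ).re * (⟪g, A g⟫_ℂ).re := by
          apply mul_le_mul h2 h3 (by positivity) (hpos f)

end
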